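/- If G is a bi-orderable group, then G is locally indicable: every nontrivial finitely generated subgroup of G admits a surjective homomorphism onto ℤ. -/

import Mathlib

open Filter

section AuxPow

variable {K : Type*} [Group K] [LinearOrder K]
  [CovariantClass K K (· * ·) (· < ·)] [CovariantClass K K (Function.swap (· * ·)) (· < ·)]

private lemma auxPowComm {x y : K} (h : y * x ≤ x * y) : ∀ n : ℕ, y ^ n * x ≤ x * y ^ n := by
  haveI : CovariantClass K K (· * ·) (· ≤ ·) := covariantClass_le_of_lt _ _ _
  haveI : CovariantClass K K (Function.swap (· * ·)) (· ≤ ·) := covariantClass_le_of_lt _ _ _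
  intro n
  induction n with
  | zero => simp
  | succ n ih =>
    calc y ^ (n+1) * x = y * (y ^ n * x) := by rw [pow_succ']; rw [mul_assoc]
      _ ≤ y * (x * y ^ n) := mul_le_mul_right ih y
      _ = (y * x) * y ^ n := by rw [mul_assoc]
      _ ≤ (x * y) * y ^ n := mul_le_mul_left h _
      _ = x * y ^ (n+1) := by rw [mul_assoc, ← pow_succ']

private lemma auxPowMul {x y : K} (h : y * x ≤ x * y) (n : ℕ) : (x * y) ^ n ≤ x ^ n * y ^ n := by
  haveI : CovariantClass K K (· * ·) (· ≤ ·) := covariantClass_le_of_lt _ _ _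
  haveI : CovariantClass K K (Function.swap (· * ·)) (· ≤ ·) := covariantClass_le_of_lt _ _ _
  induction n with
  | zero => simp
  | succ n ih =>
    calc (x*y) ^ (n+1) = (x*y) ^ n * (x*y) := pow_succ _ _
      _ ≤ (x ^ n * y ^ n) * (x * y) := mul_le_mul_left ih _
      _ = x ^ n * (y ^ n * x) * y := by group
      _ ≤ x ^ n * (x * y ^ n) * y := mul_le_mul_left (mul_le_mul_right (auxPowComm h n) _) _
      _ = x ^ (n+1) * y ^ (n+1) := by group

private lemma auxMulPow {x y : K} (h : y * x ≤ x * y) (n : ℕ) : y ^ n * x ^ n ≤ (y * x) ^ n := by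
  haveI : CovariantClass K K (· * ·) (· ≤ ·) := covariantClass_le_of_lt _ _ _
  haveI : CovariantClass K K (Function.swap (· * ·)) (· ≤ ·) := covariantClass_le_of_lt _ _ _
  induction n with
  | zero => simp
  | succ n ih =>
    calc y ^ (n+1) * x ^ (n+1) = y * (y ^ n * x) * x ^ n := by group
      _ ≤ y * (x * y ^ n) * x ^ n := mul_le_mul_left (mul_le_mul_right (auxPowComm h n) _) _
      _ = (y * x) * (y ^ n * x ^ n) := by group
      _ ≤ (y * x) * (y * x) ^ n := mul_le_mul_right ih _
      _ = (y * x) ^ (n+1) := by rw [← pow_succ']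

private theorem mainSurj (S : Finset K) (hS : Subgroup.closure (S : Set K) = ⊤) [Nontrivial K] :
    ∃ φ : K →* Multiplicative ℤ, Function.Surjective φ := by
  classical
  haveI : CovariantClass K K (· * ·) (· ≤ ·) := covariantClass_le_of_lt _ _ _
  haveI : CovariantClass K K (Function.swap (· * ·)) (· ≤ ·) := covariantClass_le_of_lt _ _ _
  -- the dominant generator g
  set T : Finset K := S ∪ S.image (·⁻¹) with hT
  have hTne : T.Nonempty := by
    rcases S.eq_empty_or_nonempty with rfl | hne
    · exfalso
      rw [Finset.coe_empty, Subgroup.closure_empty] at hS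
      obtain ⟨x, hx⟩ := exists_ne (1 : K)
      exact hx (Subgroup.mem_bot.1 (hS ▸ Subgroup.mem_top x))
    · exact hne.mono Finset.subset_union_left
  set g : K := T.max' hTne with hg
  have hgT : ∀ t ∈ T, t ≤ g := fun t ht => T.le_max' t ht
  have hg1 : (1 : K) < g := by
    by_contra hle
    push_neg at hle
    have hone : ∀ s ∈ S, s = 1 := by
      intro s hs
      have h1 : s ≤ 1 := (hgT s (Finset.mem_union_left _ hs)).trans hle
      have h2 : s⁻¹ ≤ 1 :=
        (hgT s⁻¹ (Finset.mem_union_right _ (Finset.mem_image_of_mem _ hs))).trans hle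
      exact le_antisymm h1 (inv_le_one'.1 h2)
    obtain ⟨x, hx⟩ := exists_ne (1 : K)
    have hcl : Subgroup.closure (S : Set K) ≤ ⊥ := by
      rw [Subgroup.closure_le]
      intro s hs
      simp [hone s hs]
    exact hx (Subgroup.mem_bot.1 (hcl (hS ▸ Subgroup.mem_top x)))
  -- every element is bounded by powers of g
  have hbound : ∀ x : K, ∃ n : ℕ, x < g ^ n ∧ x⁻¹ < g ^ n := by
    have hgg : g < g ^ 2 := by
      rw [pow_two]; exact lt_mul_of_one_lt_right' g hg1
    let B : Subgroup K :=
      { carrier := {x | ∃ n : ℕ, x < g ^ n ∧ x⁻¹ < g ^ n}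
        one_mem' := ⟨1, by simpa using hg1, by simpa using hg1⟩
        mul_mem' := by
          rintro a b ⟨n, han, hain⟩ ⟨m, hbm, hbim⟩
          refine ⟨n + m, ?_, ?_⟩
          · rw [pow_add]; exact mul_lt_mul_of_lt_of_lt han hbm
          · rw [mul_inv_rev, add_comm, pow_add]
            exact mul_lt_mul_of_lt_of_lt hbim hain
        inv_mem' := by
          rintro a ⟨n, h1, h2⟩
          exact ⟨n, h2, by simpa using h1⟩ }
    have hSB : Subgroup.closure (S : Set K) ≤ B := by
      rw [Subgroup.closure_le]
      intro s hs
      refine ⟨2, ?_, ?_⟩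
      · exact lt_of_le_of_lt (hgT s (Finset.mem_union_left _ hs)) hgg
      · exact lt_of_le_of_lt
          (hgT s⁻¹ (Finset.mem_union_right _ (Finset.mem_image_of_mem _ hs))) hgg
    intro x
    exact hSB (hS ▸ Subgroup.mem_top x)
  -- the integer logarithm L
  have sm : StrictMono (fun m : ℤ => g ^ m) :=
    strictMono_int_of_lt_succ fun m => by
      rw [zpow_add_one]; exact lt_mul_of_one_lt_right' _ hg1
  have hLex : ∀ x : K, ∃ m : ℤ, g ^ m ≤ x ∧ ∀ k : ℤ, g ^ k ≤ x → k ≤ m := by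
    intro x
    obtain ⟨n, hxn, hxin⟩ := hbound x
    have hub : ∀ z : ℤ, g ^ z ≤ x → z ≤ (n : ℤ) := by
      intro z hz
      by_contra hzn
      push_neg at hzn
      have h2 : g ^ (n : ℤ) < g ^ z := sm hzn
      rw [zpow_natCast] at h2
      exact absurd ((h2.trans_le hz).trans hxn) (lt_irrefl _)
    have hinh : g ^ (-(n : ℤ)) ≤ x := by
      rw [zpow_neg, zpow_natCast]
      have := inv_lt_inv_iff.2 hxin
      rw [inv_inv] at this
      exact this.le
    exact Int.exists_greatest_of_bdd ⟨(n : ℤ), hub⟩ ⟨-(n : ℤ), hinh⟩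
  choose L hL1 hL2 using hLex
  have le_L : ∀ (x : K) (m : ℤ), g ^ m ≤ x ↔ m ≤ L x := fun x m =>
    ⟨hL2 x m, fun h => (sm.monotone h).trans (hL1 x)⟩
  have L_lt : ∀ (x : K) (m : ℤ), x < g ^ m ↔ L x < m := fun x m =>
    lt_iff_not_ge.trans ((le_L x m).not.trans not_le)
  have hLlt : ∀ x : K, x < g ^ (L x + 1) := fun x => (L_lt x _).2 (by omega)
  have L_mono : ∀ x y : K, x ≤ y → L x ≤ L y := fun x y h => hL2 y _ ((hL1 x).trans h)
  have L_mul_ge : ∀ x y : K, L x + L y ≤ L (x * y) := by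
    intro x y
    apply hL2
    rw [zpow_add]
    exact mul_le_mul' (hL1 x) (hL1 y)
  have L_mul_le : ∀ x y : K, L (x * y) ≤ L x + L y + 1 := by
    intro x y
    have h1 : x * y < g ^ (L x + 1 + (L y + 1)) := by
      rw [zpow_add]
      exact mul_lt_mul_of_lt_of_lt (hLlt x) (hLlt y)
    have := (L_lt _ _).1 h1
    omega
  have L_one : L 1 = 0 := by
    have h1 : (0 : ℤ) ≤ L 1 := hL2 1 0 (by simp)
    have h2 : L 1 < 1 := (L_lt 1 1).1 (by simpa using hg1)
    omega
  have L_gpow : ∀ n : ℕ, L (g ^ n) = n := by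
    intro n
    have h1 : (n : ℤ) ≤ L (g ^ n) := hL2 _ _ (by rw [zpow_natCast])
    have h2 : L (g ^ n) < (n : ℤ) + 1 := (L_lt _ _).1 (by
      rw [zpow_add_one, zpow_natCast]
      exact lt_mul_of_one_lt_right' _ hg1)
    omega
  have L_pow_ge : ∀ (x : K) (n : ℕ), (n : ℤ) * L x ≤ L (x ^ n) := by
    intro x n
    induction n with
    | zero => simp [L_one]
    | succ n ih =>
      have h1 := L_mul_ge (x ^ n) x
      rw [← pow_succ] at h1
      push_cast
      linarith
  -- the translation-number homomorphism φ : K → ℝ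
  set u : K → ℕ → ℝ := fun x n => ((L (x ^ n) : ℝ) + 1) with hu
  have husub : ∀ x : K, Subadditive (u x) := by
    intro x m n
    have h1 := L_mul_le (x ^ m) (x ^ n)
    rw [← pow_add] at h1
    simp only [hu]
    push_cast
    have : ((L (x ^ (m + n)) : ℝ)) ≤ (L (x ^ m) : ℝ) + (L (x ^ n) : ℝ) + 1 := by
      exact_mod_cast h1
    linarith
  have hbb : ∀ x : K, BddBelow (Set.range fun n : ℕ => u x n / n) := by
    intro x
    refine ⟨min (L x : ℝ) 0, ?_⟩
    rintro r ⟨n, rfl⟩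
    rcases Nat.eq_zero_or_pos n with rfl | hn
    · simp only [Nat.cast_zero, div_zero]
      exact min_le_right _ _
    · have h1 : ((n : ℤ) * L x : ℝ) ≤ (L (x ^ n) : ℝ) := by exact_mod_cast L_pow_ge x n
      have hn' : (0 : ℝ) < n := by exact_mod_cast hn
      refine le_trans (min_le_left _ _) ?_
      simp only [hu]
      rw [le_div_iff₀ hn']
      push_cast at h1
      nlinarith
  set φ : K → ℝ := fun x => (husub x).lim with hφ
  have htend : ∀ x : K, Tendsto (fun n : ℕ => u x n / n) atTop (nhds (φ x)) :=
    fun x => (husub x).tendsto_lim (hbb x)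
  have hdiv : ∀ (a b : ℝ) (n : ℕ), a ≤ b → a / (n : ℝ) ≤ b / (n : ℝ) := by
    intro a b n h
    rw [div_eq_mul_inv, div_eq_mul_inv]
    exact mul_le_mul_of_nonneg_right h (by positivity)
  have haddlim : ∀ (x : K) (c : ℝ),
      Tendsto (fun n : ℕ => (u x n + c) / n) atTop (nhds (φ x)) := by
    intro x c
    have h1 := (htend x).add (tendsto_const_div_atTop_nhds_zero_nat c)
    rw [add_zero] at h1
    exact h1.congr fun n => (add_div _ _ _).symm
  -- conjugation invariance
  have hconj : ∀ h x : K, φ (h * x * h⁻¹) = φ x := by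
    intro h x
    have hub : ∀ n : ℕ, u (h * x * h⁻¹) n ≤ u x n + ((L h + L h⁻¹ + 2 : ℤ) : ℝ) := by
      intro n
      have e : (h * x * h⁻¹) ^ n = h * (x ^ n * h⁻¹) := by
        rw [conj_pow, mul_assoc]
      have l1 : L ((h * x * h⁻¹) ^ n) ≤ L h + L (x ^ n * h⁻¹) + 1 := by
        rw [e]; exact L_mul_le _ _
      have l2 : L (x ^ n * h⁻¹) ≤ L (x ^ n) + L h⁻¹ + 1 := L_mul_le _ _
      simp only [hu]
      push_cast
      have : (L ((h * x * h⁻¹) ^ n) : ℝ) ≤ (L h : ℝ) + ((L (x ^ n) : ℝ) + (L h⁻¹) + 1) + 1 := by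
        exact_mod_cast l1.trans (by omega : L h + L (x ^ n * h⁻¹) + 1 ≤ L h + (L (x ^ n) + L h⁻¹ + 1) + 1)
      linarith
    have hlb : ∀ n : ℕ, u x n + ((L h + L h⁻¹ : ℤ) : ℝ) ≤ u (h * x * h⁻¹) n := by
      intro n
      have e : (h * x * h⁻¹) ^ n = h * (x ^ n * h⁻¹) := by
        rw [conj_pow, mul_assoc]
      have l1 : L h + L (x ^ n * h⁻¹) ≤ L ((h * x * h⁻¹) ^ n) := by
        rw [e]; exact L_mul_ge _ _
      have l2 : L (x ^ n) + L h⁻¹ ≤ L (x ^ n * h⁻¹) := L_mul_ge _ _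
      simp only [hu]
      push_cast
      have : (L h : ℝ) + ((L (x ^ n) : ℝ) + (L h⁻¹)) ≤ (L ((h * x * h⁻¹) ^ n) : ℝ) := by
        exact_mod_cast (by omega : L h + (L (x ^ n) + L h⁻¹) ≤ L h + L (x ^ n * h⁻¹)).trans l1
      linarith
    refine tendsto_nhds_unique (htend (h * x * h⁻¹)) ?_
    refine tendsto_of_tendsto_of_tendsto_of_le_of_le
      (haddlim x ((L h + L h⁻¹ : ℤ) : ℝ)) (haddlim x ((L h + L h⁻¹ + 2 : ℤ) : ℝ)) ?_ ?_
    · intro n; exact hdiv _ _ n (hlb n)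
    · intro n; exact hdiv _ _ n (hub n)
  -- additivity
  have hle : ∀ x y : K, y * x ≤ x * y → φ (x * y) ≤ φ x + φ y := by
    intro x y hxy
    refine le_of_tendsto_of_tendsto' (htend (x * y)) ((htend x).add (htend y)) ?_
    intro n
    have h1 : (x * y) ^ n ≤ x ^ n * y ^ n := auxPowMul hxy n
    have h2 : L ((x * y) ^ n) ≤ L (x ^ n) + L (y ^ n) + 1 :=
      (L_mono _ _ h1).trans (L_mul_le _ _)
    have h3 : u (x * y) n ≤ u x n + u y n := by
      simp only [hu]
      have : (L ((x * y) ^ n) : ℝ) ≤ (L (x ^ n) : ℝ) + (L (y ^ n) : ℝ) + 1 := by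
        exact_mod_cast h2
      linarith
    calc u (x * y) n / n ≤ (u x n + u y n) / n := hdiv _ _ n h3
      _ = u x n / n + u y n / n := add_div _ _ _
  have hge : ∀ x y : K, y * x ≤ x * y → φ y + φ x ≤ φ (y * x) := by
    intro x y hxy
    have t1 : Tendsto (fun n : ℕ => (u y n + u x n + (-1 : ℝ)) / n) atTop
        (nhds (φ y + φ x)) := by
      have h1 := ((htend y).add (htend x)).add (tendsto_const_div_atTop_nhds_zero_nat (-1))
      rw [add_zero] at h1
      exact h1.congr fun n => by rw [← add_div, ← add_div]
    refine le_of_tendsto_of_tendsto' t1 (htend (y * x)) ?_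
    intro n
    have h1 : y ^ n * x ^ n ≤ (y * x) ^ n := auxMulPow hxy n
    have h2 : L (y ^ n) + L (x ^ n) ≤ L ((y * x) ^ n) :=
      (L_mul_ge _ _).trans (L_mono _ _ h1)
    have h3 : u y n + u x n + (-1 : ℝ) ≤ u (y * x) n := by
      simp only [hu]
      have : (L (y ^ n) : ℝ) + (L (x ^ n) : ℝ) ≤ (L ((y * x) ^ n) : ℝ) := by
        exact_mod_cast h2
      linarith
    exact hdiv _ _ n h3
  have hadd : ∀ x y : K, φ (x * y) = φ x + φ y := by
    intro x y
    have hc : φ (y * x) = φ (x * y) := by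
      have := hconj y (x * y)
      rw [show y * (x * y) * y⁻¹ = y * x by group] at this
      exact this
    rcases le_total (y * x) (x * y) with h | h
    · refine le_antisymm (hle x y h) ?_
      have := hge x y h
      rw [hc] at this
      linarith
    · have h1 := hle y x h
      have h2 := hge y x h
      rw [hc] at h1
      linarith
  have hφ1 : φ 1 = 0 := by
    have := hadd 1 1
    rw [mul_one] at this
    linarith
  have hφinv : ∀ x : K, φ x⁻¹ = -φ x := by
    intro x
    have := hadd x x⁻¹
    rw [mul_inv_cancel, hφ1] at this
    linarith
  have hφg : φ g = 1 := by
    have t1 : Tendsto (fun n : ℕ => u g n / n) atTop (nhds 1) := by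
      have h1 : Tendsto (fun n : ℕ => 1 + 1 / (n : ℝ)) atTop (nhds 1) := by
        have := tendsto_const_nhds (x := (1 : ℝ)) (f := atTop (α := ℕ)) |>.add
          tendsto_one_div_atTop_nhds_zero_nat
        rwa [add_zero] at this
      refine h1.congr' ?_
      filter_upwards [eventually_gt_atTop 0] with n hn
      have hn' : (n : ℝ) ≠ 0 := by positivity
      simp only [hu, L_gpow]
      field_simp
      simp
    exact tendsto_nhds_unique (htend g) t1
  -- the image subgroup of ℝ
  set A : AddSubgroup ℝ := AddSubgroup.closure (φ '' (S : Set K)) with hA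
  have hmemA : ∀ x : K, φ x ∈ A := by
    intro x
    have hx : x ∈ Subgroup.closure (S : Set K) := hS ▸ Subgroup.mem_top x
    induction hx using Subgroup.closure_induction with
    | mem s hs => exact AddSubgroup.subset_closure ⟨s, hs, rfl⟩
    | one => rw [hφ1]; exact zero_mem A
    | mul a b _ _ ha hb => rw [hadd]; exact add_mem ha hb
    | inv a _ ha => rw [hφinv]; exact neg_mem ha
  have hrange : ∀ r ∈ A, ∃ x : K, φ x = r := by
    intro r hr
    induction hr using AddSubgroup.closure_induction with
    | mem s hs => obtain ⟨t, _, rfl⟩ := hs; exact ⟨t, rfl⟩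
    | zero => exact ⟨1, hφ1⟩
    | add a b _ _ ha hb =>
      obtain ⟨xa, rfl⟩ := ha; obtain ⟨xb, rfl⟩ := hb; exact ⟨xa * xb, hadd xa xb⟩
    | neg a _ ha => obtain ⟨xa, rfl⟩ := ha; exact ⟨xa⁻¹, hφinv xa⟩
  have hAfg : A.FG := by
    refine ⟨S.image φ, ?_⟩
    rw [Finset.coe_image, hA]
  -- the surjection A →+ ℤ
  have hsurjA : ∃ f : A →+ ℤ, Function.Surjective f := by
    haveI : AddGroup.FG A := (AddGroup.fg_iff_addSubgroup_fg A).2 hAfg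
    haveI : Module.Finite ℤ A := Module.Finite.iff_addGroup_fg.2 ‹_›
    haveI : NoZeroSMulDivisors ℤ A := by
      constructor
      intro c x h
      have h0 : c • (x : ℝ) = 0 := by rw [← AddSubgroup.coe_zsmul, h, AddSubgroup.coe_zero]
      rcases smul_eq_zero.1 h0 with h | h
      · exact Or.inl h
      · exact Or.inr (by ext; simpa using h)
    haveI : Module.Free ℤ A := Module.free_of_finite_type_torsion_free'
    haveI : Nontrivial A := by
      refine ⟨⟨1, hφg ▸ hmemA g⟩, 0, ?_⟩
      intro hcontra
      have : (1 : ℝ) = 0 := congrArg Subtype.val hcontra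
      norm_num at this
    let b := Module.Free.chooseBasis ℤ A
    haveI : Nonempty (Module.Free.ChooseBasisIndex ℤ A) := b.index_nonempty
    let i := Classical.arbitrary (Module.Free.ChooseBasisIndex ℤ A)
    refine ⟨(b.coord i).toAddMonoidHom, fun n => ⟨n • b i, ?_⟩⟩
    simp
  obtain ⟨c, hc⟩ := hsurjA
  -- assemble the final homomorphism
  refine ⟨{ toFun := fun x => Multiplicative.ofAdd (c ⟨φ x, hmemA x⟩)
            map_one' := ?_
            map_mul' := ?_ }, ?_⟩
  · show Multiplicative.ofAdd (c ⟨φ 1, hmemA 1⟩) = 1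
    have e : (⟨φ 1, hmemA 1⟩ : A) = 0 := Subtype.ext hφ1
    rw [e, map_zero]
    rfl
  · intro x y
    show Multiplicative.ofAdd (c ⟨φ (x * y), hmemA (x * y)⟩) =
      Multiplicative.ofAdd (c ⟨φ x, hmemA x⟩) * Multiplicative.ofAdd (c ⟨φ y, hmemA y⟩)
    have e : (⟨φ (x * y), hmemA (x * y)⟩ : A) = ⟨φ x, hmemA x⟩ + ⟨φ y, hmemA y⟩ :=
      Subtype.ext (hadd x y)
    rw [e, map_add]
    rfl
  · intro n
    obtain ⟨a, ha⟩ := hc (Multiplicative.toAdd n)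
    obtain ⟨x, hx⟩ := hrange (a : ℝ) a.2
    refine ⟨x, ?_⟩
    show Multiplicative.ofAdd (c ⟨φ x, hmemA x⟩) = n
    have e : (⟨φ x, hmemA x⟩ : A) = a := Subtype.ext hx
    rw [e, ha]
    rfl

end AuxPow

/-- A group is bi-orderable if it admits a strict total order invariant under
left and right multiplication. -/
def IsBiOrderable (G : Type*) [Group G] : Prop :=
  ∃ r : G → G → Prop, IsStrictTotalOrder G r ∧
    (∀ f g h : G, r g h → r (f * g) (f * h)) ∧
    (∀ f g h : G, r g h → r (g * f) (h * f))

/-- A bi-orderable group is locally indicable: every nontrivial finitely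
generated subgroup surjects onto `ℤ`. -/
theorem biOrderable_locallyIndicable {G : Type*} [Group G] (h : IsBiOrderable G) :
    ∀ H : Subgroup G, H ≠ ⊥ → H.FG →
      ∃ φ : H →* Multiplicative ℤ, Function.Surjective φ := by
  classical
  obtain ⟨r, hsto, hleft, hright⟩ := h
  intro H hne hfg
  haveI := hsto
  letI : DecidableRel r := fun a b => Classical.dec _
  letI : LinearOrder G := linearOrderOfSTO r
  have hlt : ∀ a b : G, a < b ↔ r a b := fun a b => Iff.rfl
  letI : LinearOrder H := inferInstance
  haveI : CovariantClass H H (· * ·) (· < ·) := by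
    constructor
    rintro a b c hbc
    have : r ((a : G) * b) ((a : G) * c) := hleft _ _ _ ((hlt _ _).1 (Subtype.coe_lt_coe.2 hbc))
    exact Subtype.coe_lt_coe.1 ((hlt _ _).2 this)
  haveI : CovariantClass H H (Function.swap (· * ·)) (· < ·) := by
    constructor
    rintro a b c hbc
    have : r ((b : G) * a) ((c : G) * a) := hright _ _ _ ((hlt _ _).1 (Subtype.coe_lt_coe.2 hbc))
    exact Subtype.coe_lt_coe.1 ((hlt _ _).2 this)
  haveI : Nontrivial H := (Subgroup.nontrivial_iff_ne_bot H).2 hne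
  haveI : Group.FG H := (Group.fg_iff_subgroup_fg H).2 hfg
  obtain ⟨S, hSc⟩ := Group.fg_def.1 ‹Group.FG H›
  exact mainSurj S hSc
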